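/- Generalized Schwarz inequality: suppose μ, μ₁, μ₂ are measures on a σ-algebra 𝔐 with μ(ω) ≤ (μ₁(ω) μ₂(ω))^{1/2} for every ω ∈ 𝔐. If f₁ ∈ L²(μ₁) and f₂ ∈ L²(μ₂), then f₁·f₂ ∈ L¹(μ) and ∫ |f₁ f₂| dμ ≤ (∫ |f₁|² dμ₁)^{1/2} · (∫ |f₂|² dμ₂)^{1/2}. -/

import Mathlib

open MeasureTheory ENNReal


lemma my_hmul (x y : ℝ≥0∞) : (x * y) ^ (1/2 : ℝ) = x ^ (1/2 : ℝ) * y ^ (1/2 : ℝ) :=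
  ENNReal.mul_rpow_of_nonneg _ _ (by norm_num)

lemma my_half2 (x : ℝ≥0∞) : (x ^ (1/2 : ℝ)) ^ (2 : ℝ) = x := by
  rw [← ENNReal.rpow_mul]; norm_num

-- two-point Cauchy-Schwarz in ℝ≥0∞
lemma my_two_point (a₁ b₁ a₂ b₂ : ℝ≥0∞) :
    (a₁ * b₁) ^ (1/2 : ℝ) + (a₂ * b₂) ^ (1/2 : ℝ) ≤ ((a₁ + a₂) * (b₁ + b₂)) ^ (1/2 : ℝ) := by
  have hpq : Real.HolderConjugate 2 2 := ⟨by norm_num, by norm_num, by norm_num⟩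
  set F : Bool → ℝ≥0∞ := fun t => if t then a₁ ^ (1/2 : ℝ) else a₂ ^ (1/2 : ℝ) with hF
  set G : Bool → ℝ≥0∞ := fun t => if t then b₁ ^ (1/2 : ℝ) else b₂ ^ (1/2 : ℝ) with hG
  have hmF : AEMeasurable F (Measure.count : Measure Bool) :=
    (measurable_of_countable F).aemeasurable
  have hmG : AEMeasurable G (Measure.count : Measure Bool) :=
    (measurable_of_countable G).aemeasurable
  have H := ENNReal.lintegral_mul_le_Lp_mul_Lq (Measure.count : Measure Bool) hpq hmF hmG
  have e1 : ∫⁻ t, (F * G) t ∂(Measure.count : Measure Bool)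
      = (a₁ * b₁) ^ (1/2 : ℝ) + (a₂ * b₂) ^ (1/2 : ℝ) := by
    rw [lintegral_count, tsum_bool]
    show a₂ ^ (1/2:ℝ) * b₂ ^ (1/2:ℝ) + a₁ ^ (1/2:ℝ) * b₁ ^ (1/2:ℝ) = _
    rw [← my_hmul, ← my_hmul, add_comm]
  have e2 : ∫⁻ t, F t ^ (2:ℝ) ∂(Measure.count : Measure Bool) = a₁ + a₂ := by
    rw [lintegral_count, tsum_bool]
    show (a₂ ^ (1/2:ℝ)) ^ (2:ℝ) + (a₁ ^ (1/2:ℝ)) ^ (2:ℝ) = _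
    rw [my_half2, my_half2, add_comm]
  have e3 : ∫⁻ t, G t ^ (2:ℝ) ∂(Measure.count : Measure Bool) = b₁ + b₂ := by
    rw [lintegral_count, tsum_bool]
    show (b₂ ^ (1/2:ℝ)) ^ (2:ℝ) + (b₁ ^ (1/2:ℝ)) ^ (2:ℝ) = _
    rw [my_half2, my_half2, add_comm]
  calc (a₁ * b₁) ^ (1/2 : ℝ) + (a₂ * b₂) ^ (1/2 : ℝ)
      = ∫⁻ t, (F * G) t ∂(Measure.count : Measure Bool) := e1.symm
    _ ≤ (∫⁻ t, F t ^ (2:ℝ) ∂(Measure.count : Measure Bool)) ^ (1/(2:ℝ))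
        * (∫⁻ t, G t ^ (2:ℝ) ∂(Measure.count : Measure Bool)) ^ (1/(2:ℝ)) := H
    _ = (a₁ + a₂) ^ (1/2 : ℝ) * (b₁ + b₂) ^ (1/2 : ℝ) := by rw [e2, e3]
    _ = ((a₁ + a₂) * (b₁ + b₂)) ^ (1/2 : ℝ) := (my_hmul _ _).symm

lemma my_finset_CS {ι : Type*} (s : Finset ι) (a b : ι → ℝ≥0∞) :
    ∑ i ∈ s, (a i * b i) ^ (1/2 : ℝ)
      ≤ (∑ i ∈ s, a i) ^ (1/2 : ℝ) * (∑ i ∈ s, b i) ^ (1/2 : ℝ) := by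
  induction s using Finset.cons_induction with
  | empty => simp
  | cons i s hi ih =>
    rw [Finset.sum_cons, Finset.sum_cons, Finset.sum_cons]
    calc (a i * b i) ^ (1/2 : ℝ) + ∑ j ∈ s, (a j * b j) ^ (1/2 : ℝ)
        ≤ (a i * b i) ^ (1/2 : ℝ) + (∑ j ∈ s, a j) ^ (1/2 : ℝ) * (∑ j ∈ s, b j) ^ (1/2 : ℝ) :=
          add_le_add_right ih _
      _ = (a i * b i) ^ (1/2 : ℝ) + ((∑ j ∈ s, a j) * (∑ j ∈ s, b j)) ^ (1/2 : ℝ) := by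
          rw [my_hmul (∑ j ∈ s, a j) (∑ j ∈ s, b j)]
      _ ≤ ((a i + ∑ j ∈ s, a j) * (b i + ∑ j ∈ s, b j)) ^ (1/2 : ℝ) := my_two_point _ _ _ _
      _ = (a i + ∑ j ∈ s, a j) ^ (1/2 : ℝ) * (b i + ∑ j ∈ s, b j) ^ (1/2 : ℝ) := my_hmul _ _

lemma my_simple_CS {Ω : Type*} [MeasurableSpace Ω] (μ μ₁ μ₂ : Measure Ω)
    (h : ∀ ω : Set Ω, MeasurableSet ω → μ ω ≤ (μ₁ ω * μ₂ ω) ^ (1 / 2 : ℝ))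
    (s₁ s₂ : SimpleFunc Ω ℝ≥0∞) :
    ∫⁻ x, s₁ x * s₂ x ∂μ ≤
      (∫⁻ x, (s₁ x) ^ 2 ∂μ₁) ^ (1/2 : ℝ) * (∫⁻ x, (s₂ x) ^ 2 ∂μ₂) ^ (1/2 : ℝ) := by
  set P := s₁.pair s₂ with hP
  have sq_half : ∀ x : ℝ≥0∞, (x ^ (2:ℕ)) ^ (1/2:ℝ) = x := by
    intro x
    rw [← ENNReal.rpow_natCast x 2, ← ENNReal.rpow_mul]
    norm_num
  have e1 : ∫⁻ x, s₁ x * s₂ x ∂μ = ∑ z ∈ P.range, z.1 * z.2 * μ (P ⁻¹' {z}) := by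
    have : (fun x => s₁ x * s₂ x) = ⇑(P.map (fun z => z.1 * z.2)) := by
      funext x
      simp [hP, SimpleFunc.map_apply, SimpleFunc.pair_apply]
    rw [this, SimpleFunc.lintegral_eq_lintegral, SimpleFunc.map_lintegral]
  have e2 : ∫⁻ x, (s₁ x) ^ 2 ∂μ₁ = ∑ z ∈ P.range, z.1 ^ 2 * μ₁ (P ⁻¹' {z}) := by
    have : (fun x => (s₁ x) ^ 2) = ⇑(P.map (fun z => z.1 ^ 2)) := by
      funext x
      simp [hP, SimpleFunc.map_apply, SimpleFunc.pair_apply]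
    rw [this, SimpleFunc.lintegral_eq_lintegral, SimpleFunc.map_lintegral]
  have e3 : ∫⁻ x, (s₂ x) ^ 2 ∂μ₂ = ∑ z ∈ P.range, z.2 ^ 2 * μ₂ (P ⁻¹' {z}) := by
    have : (fun x => (s₂ x) ^ 2) = ⇑(P.map (fun z => z.2 ^ 2)) := by
      funext x
      simp [hP, SimpleFunc.map_apply, SimpleFunc.pair_apply]
    rw [this, SimpleFunc.lintegral_eq_lintegral, SimpleFunc.map_lintegral]
  rw [e1, e2, e3]
  calc ∑ z ∈ P.range, z.1 * z.2 * μ (P ⁻¹' {z})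
      ≤ ∑ z ∈ P.range, ((z.1 ^ 2 * μ₁ (P ⁻¹' {z})) * (z.2 ^ 2 * μ₂ (P ⁻¹' {z}))) ^ (1/2:ℝ) := by
        refine Finset.sum_le_sum fun z _ => ?_
        calc z.1 * z.2 * μ (P ⁻¹' {z})
            ≤ z.1 * z.2 * (μ₁ (P ⁻¹' {z}) * μ₂ (P ⁻¹' {z})) ^ (1/2:ℝ) := by
              gcongr
              exact h _ (P.measurableSet_fiber z)
          _ = ((z.1 ^ 2 * μ₁ (P ⁻¹' {z})) * (z.2 ^ 2 * μ₂ (P ⁻¹' {z}))) ^ (1/2:ℝ) := by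
              rw [my_hmul (z.1 ^ 2 * μ₁ (⇑P ⁻¹' {z})) (z.2 ^ 2 * μ₂ (⇑P ⁻¹' {z})),
                  my_hmul (z.1 ^ 2) (μ₁ (⇑P ⁻¹' {z})), my_hmul (z.2 ^ 2) (μ₂ (⇑P ⁻¹' {z})),
                  sq_half, sq_half, my_hmul (μ₁ (⇑P ⁻¹' {z})) (μ₂ (⇑P ⁻¹' {z}))]
              ring
    _ ≤ (∑ z ∈ P.range, z.1 ^ 2 * μ₁ (P ⁻¹' {z})) ^ (1/2:ℝ)
        * (∑ z ∈ P.range, z.2 ^ 2 * μ₂ (P ⁻¹' {z})) ^ (1/2:ℝ) := my_finset_CS _ _ _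

lemma my_key {Ω : Type*} [MeasurableSpace Ω] (μ μ₁ μ₂ : Measure Ω)
    (h : ∀ ω : Set Ω, MeasurableSet ω → μ ω ≤ (μ₁ ω * μ₂ ω) ^ (1 / 2 : ℝ))
    (F₁ F₂ : Ω → ℝ≥0∞) (hF₁ : Measurable F₁) (hF₂ : Measurable F₂) :
    ∫⁻ x, F₁ x * F₂ x ∂μ ≤
      (∫⁻ x, (F₁ x) ^ 2 ∂μ₁) ^ (1/2 : ℝ) * (∫⁻ x, (F₂ x) ^ 2 ∂μ₂) ^ (1/2 : ℝ) := by
  have sup_mul : ∀ (a b : ℕ → ℝ≥0∞), Monotone a → Monotone b →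
      (⨆ n, a n) * (⨆ n, b n) = ⨆ n, a n * b n := by
    intro a b ha hb
    apply le_antisymm
    · rw [ENNReal.iSup_mul]
      refine iSup_le fun i => ?_
      rw [ENNReal.mul_iSup]
      refine iSup_le fun j => ?_
      exact le_iSup_of_le (max i j)
        (mul_le_mul' (ha (le_max_left i j)) (hb (le_max_right i j)))
    · exact iSup_le fun n => mul_le_mul' (le_iSup a n) (le_iSup b n)
  have hmono : Monotone fun n => fun x =>
      (SimpleFunc.eapprox F₁ n) x * (SimpleFunc.eapprox F₂ n) x := by
    intro m n hmn x
    exact mul_le_mul' (SimpleFunc.monotone_eapprox F₁ hmn x)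
      (SimpleFunc.monotone_eapprox F₂ hmn x)
  have e : ∫⁻ x, F₁ x * F₂ x ∂μ
      = ⨆ n, ∫⁻ x, (SimpleFunc.eapprox F₁ n) x * (SimpleFunc.eapprox F₂ n) x ∂μ := by
    rw [← lintegral_iSup (f := fun n x => (SimpleFunc.eapprox F₁ n) x * (SimpleFunc.eapprox F₂ n) x) (fun n => ((SimpleFunc.eapprox F₁ n).measurable.mul
      (SimpleFunc.eapprox F₂ n).measurable)) hmono]
    congr 1
    funext x
    rw [← sup_mul _ _ (fun m n hmn => SimpleFunc.monotone_eapprox F₁ hmn x)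
      (fun m n hmn => SimpleFunc.monotone_eapprox F₂ hmn x),
      SimpleFunc.iSup_eapprox_apply hF₁, SimpleFunc.iSup_eapprox_apply hF₂]
  rw [e]
  refine iSup_le fun n => ?_
  refine le_trans (my_simple_CS μ μ₁ μ₂ h (SimpleFunc.eapprox F₁ n) (SimpleFunc.eapprox F₂ n)) ?_
  gcongr
  · exact (le_iSup (fun m => (SimpleFunc.eapprox F₁ m) _) n).trans_eq
      (SimpleFunc.iSup_eapprox_apply hF₁ _)
  · exact (le_iSup (fun m => (SimpleFunc.eapprox F₂ m) _) n).trans_eq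
      (SimpleFunc.iSup_eapprox_apply hF₂ _)

/-- Generalized Schwarz inequality. If `μ ω ≤ (μ₁ ω · μ₂ ω)^{1/2}` for all
measurable `ω`, `f₁ ∈ L²(μ₁)` and `f₂ ∈ L²(μ₂)`, then `f₁ f₂ ∈ L¹(μ)` and
`∫ |f₁ f₂| dμ ≤ (∫ |f₁|² dμ₁)^{1/2} (∫ |f₂|² dμ₂)^{1/2}`. -/
theorem generalized_schwarz_inequality
    {Ω : Type*} [MeasurableSpace Ω]
    (μ μ₁ μ₂ : Measure Ω)
    (h : ∀ ω : Set Ω, MeasurableSet ω → μ ω ≤ (μ₁ ω * μ₂ ω) ^ (1 / 2 : ℝ))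
    (f₁ f₂ : Ω → ℂ) (h₁ : Measurable f₁) (h₂ : Measurable f₂)
    (hf₁ : MemLp f₁ 2 μ₁) (hf₂ : MemLp f₂ 2 μ₂) :
    Integrable (fun t => f₁ t * f₂ t) μ ∧
      ∫ t, ‖f₁ t * f₂ t‖ ∂μ ≤
        Real.sqrt (∫ t, ‖f₁ t‖ ^ 2 ∂μ₁) * Real.sqrt (∫ t, ‖f₂ t‖ ^ 2 ∂μ₂) := by
  set A := ∫⁻ t, ((‖f₁ t‖₊ : ℝ≥0∞)) ^ 2 ∂μ₁ with hA
  set B := ∫⁻ t, ((‖f₂ t‖₊ : ℝ≥0∞)) ^ 2 ∂μ₂ with hB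
  have hkey := my_key μ μ₁ μ₂ h (fun t => (‖f₁ t‖₊ : ℝ≥0∞)) (fun t => (‖f₂ t‖₊ : ℝ≥0∞))
    h₁.nnnorm.coe_nnreal_ennreal h₂.nnnorm.coe_nnreal_ennreal
  have hAe : ∀ (f : Ω → ℂ) (ν : Measure Ω), MemLp f 2 ν →
      ∫⁻ t, ((‖f t‖₊ : ℝ≥0∞)) ^ 2 ∂ν ≠ ∞ := by
    intro f ν hf
    have h2 : eLpNorm f 2 ν = (∫⁻ t, ((‖f t‖₊ : ℝ≥0∞)) ^ 2 ∂ν) ^ (1/2 : ℝ) := by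
      rw [eLpNorm_eq_lintegral_rpow_enorm_toReal (by norm_num) (by norm_num)]
      norm_num [enorm_eq_nnnorm]
    have := hf.2
    rw [h2] at this
    exact ((ENNReal.rpow_lt_top_iff_of_pos (by norm_num)).mp this).ne
  have hAne : A ≠ ∞ := hAe f₁ μ₁ hf₁
  have hBne : B ≠ ∞ := hAe f₂ μ₂ hf₂
  have hlin : ∫⁻ t, (‖f₁ t * f₂ t‖₊ : ℝ≥0∞) ∂μ
      = ∫⁻ t, ((‖f₁ t‖₊ : ℝ≥0∞)) * ((‖f₂ t‖₊ : ℝ≥0∞)) ∂μ := by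
    refine lintegral_congr fun x => ?_
    rw [nnnorm_mul, ENNReal.coe_mul]
  have hint : Integrable (fun t => f₁ t * f₂ t) μ := by
    refine ⟨(h₁.mul h₂).aestronglyMeasurable, ?_⟩
    rw [HasFiniteIntegral]; simp only [enorm_eq_nnnorm]; rw [hlin]
    refine lt_of_le_of_lt hkey ?_
    exact ENNReal.mul_lt_top
      (ENNReal.rpow_lt_top_of_nonneg (by norm_num) hAne)
      (ENNReal.rpow_lt_top_of_nonneg (by norm_num) hBne)
  refine ⟨hint, ?_⟩
  have eA : ∫ t, ‖f₁ t‖ ^ 2 ∂μ₁ = A.toReal := by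
    rw [hA, ← integral_toReal (h₁.nnnorm.coe_nnreal_ennreal.pow_const 2).aemeasurable
      (Filter.Eventually.of_forall fun x => by
        exact ENNReal.pow_lt_top ENNReal.coe_lt_top)]
    refine integral_congr_ae (Filter.Eventually.of_forall fun x => ?_)
    simp [ENNReal.toReal_pow]
  have eB : ∫ t, ‖f₂ t‖ ^ 2 ∂μ₂ = B.toReal := by
    rw [hB, ← integral_toReal (h₂.nnnorm.coe_nnreal_ennreal.pow_const 2).aemeasurable
      (Filter.Eventually.of_forall fun x => by
        exact ENNReal.pow_lt_top ENNReal.coe_lt_top)]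
    refine integral_congr_ae (Filter.Eventually.of_forall fun x => ?_)
    simp [ENNReal.toReal_pow]
  have eI : ∫ t, ‖f₁ t * f₂ t‖ ∂μ
      = (∫⁻ t, ((‖f₁ t‖₊ : ℝ≥0∞)) * ((‖f₂ t‖₊ : ℝ≥0∞)) ∂μ).toReal := by
    rw [integral_norm_eq_lintegral_enorm (f := fun t => f₁ t * f₂ t) (h₁.mul h₂).aestronglyMeasurable]; simp only [enorm_eq_nnnorm]; rw [hlin]
  rw [eI, eA, eB, Real.sqrt_eq_rpow, Real.sqrt_eq_rpow, ENNReal.toReal_rpow,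
    ENNReal.toReal_rpow, ← ENNReal.toReal_mul]
  exact ENNReal.toReal_mono
    (ENNReal.mul_ne_top
      (ENNReal.rpow_lt_top_of_nonneg (by norm_num) hAne).ne
      (ENNReal.rpow_lt_top_of_nonneg (by norm_num) hBne).ne) hkey
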